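/- Let R = ℂ[[u,v]] (or the convergent power series ring), and let g ∈ R have 3-jet j³g = α₁α₂α₃ a product of three pairwise non-proportional nonzero linear forms in u, v. Then the cube of the maximal ideal m = (u,v) is contained in the Jacobian ideal J_g = (g_u, g_v). -/

import Mathlib

open MvPowerSeries

/-- Formal partial derivative of a power series in two variables. -/
noncomputable def psDeriv (i : Fin 2) (g : MvPowerSeries (Fin 2) ℂ) :
    MvPowerSeries (Fin 2) ℂ :=
  fun s => ((s i : ℂ) + 1) * MvPowerSeries.coeff (s + Finsupp.single i 1) g

/-- The linear form a·u + b·v as a power series. -/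
noncomputable def linForm (a b : ℂ) : MvPowerSeries (Fin 2) ℂ :=
  a • (MvPowerSeries.X 0) + b • (MvPowerSeries.X 1)

namespace D4Aux

open Matrix

abbrev R2 := MvPowerSeries (Fin 2) ℂ

/-- exponent (i, j) as a finsupp -/
noncomputable def ee (i j : ℕ) : Fin 2 →₀ ℕ := Finsupp.single 0 i + Finsupp.single 1 j

lemma ee_apply0 (i j : ℕ) : ee i j 0 = i := by simp [ee]

lemma ee_apply1 (i j : ℕ) : ee i j 1 = j := by simp [ee, Finsupp.single_apply]

lemma eq_ee (s : Fin 2 →₀ ℕ) : s = ee (s 0) (s 1) := by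
  ext t
  fin_cases t <;> simp [ee, Finsupp.single_apply]

lemma ee_eq_ee_iff {i j i' j' : ℕ} : ee i j = ee i' j' ↔ i = i' ∧ j = j' := by
  constructor
  · intro h
    constructor
    · have := congrFun (congrArg (fun f : Fin 2 →₀ ℕ => (f : Fin 2 → ℕ)) h) 0
      simpa [ee_apply0] using this
    · have := congrFun (congrArg (fun f : Fin 2 →₀ ℕ => (f : Fin 2 → ℕ)) h) 1
      simpa [ee_apply1] using this
  · rintro ⟨rfl, rfl⟩; rfl

lemma sum_eq (s : Fin 2 →₀ ℕ) : s.sum (fun _ n => n) = s 0 + s 1 := by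
  rw [Finsupp.sum_fintype _ _ (fun _ => rfl), Fin.sum_univ_two]

lemma ee_add_single0 (i j : ℕ) : ee i j + Finsupp.single 0 1 = ee (i + 1) j := by
  ext t; fin_cases t <;> simp [ee, Finsupp.single_apply]

lemma ee_add_single1 (i j : ℕ) : ee i j + Finsupp.single 1 1 = ee i (j + 1) := by
  ext t; fin_cases t <;> simp [ee, Finsupp.single_apply]

lemma CXX (α : ℂ) (i j : ℕ) :
    (C : ℂ →+* R2) α * ((X 0 : R2) ^ i * (X 1 : R2) ^ j) = monomial (ee i j) α := by
  rw [X_pow_eq, X_pow_eq, monomial_mul_monomial, one_mul]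
  have : (C : ℂ →+* R2) α = monomial (0 : Fin 2 →₀ ℕ) α := rfl
  rw [this, monomial_mul_monomial, zero_add, mul_one]
  rfl

lemma X_eq_monomial (i : Fin 2) : (X i : R2) = monomial (Finsupp.single i 1) 1 := by
  rw [← pow_one (X i : R2), X_pow_eq]

lemma mem_pow_of_vanish (k : ℕ) (f : R2)
    (h : ∀ s : Fin 2 →₀ ℕ, s 0 + s 1 < k → coeff s f = 0) :
    f ∈ (Ideal.span {(X 0 : R2), X 1}) ^ k := by
  induction k generalizing f with
  | zero => simpa using Submodule.mem_top
  | succ k ih =>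
    set A : R2 := fun s => f (s + Finsupp.single 0 1) with hA
    set B : R2 := fun s => if s 0 = 0 then f (s + Finsupp.single 1 1) else 0 with hB
    have hAt : ∀ t : Fin 2 →₀ ℕ, (coeff t) A = f (t + Finsupp.single 0 1) := fun t => rfl
    have hBt : ∀ t : Fin 2 →₀ ℕ,
        (coeff t) B = if t 0 = 0 then f (t + Finsupp.single 1 1) else 0 := fun t => rfl
    have hsub0 : ∀ t : Fin 2 →₀ ℕ, ((t - Finsupp.single 1 1 : Fin 2 →₀ ℕ)) 0 = t 0 := by
      intro t; simp [Finsupp.tsub_apply, Finsupp.single_apply]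
    have hfeq : f = X 0 * A + X 1 * B := by
      apply MvPowerSeries.ext
      intro s
      rw [map_add, X_eq_monomial, X_eq_monomial, coeff_monomial_mul, coeff_monomial_mul]
      by_cases h0 : Finsupp.single (0 : Fin 2) 1 ≤ s
      · have h0' : 1 ≤ s 0 := by simpa [Finsupp.single_le_iff] using h0
        rw [if_pos h0, hAt, tsub_add_cancel_of_le h0]
        by_cases h1 : Finsupp.single (1 : Fin 2) 1 ≤ s
        · rw [if_pos h1, hBt, if_neg (by rw [hsub0]; omega), coeff_apply]
          ring
        · rw [if_neg h1, coeff_apply]; ring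
      · have h0' : s 0 = 0 := by
          by_contra hc
          exact h0 (by simpa [Finsupp.single_le_iff] using Nat.one_le_iff_ne_zero.2 hc)
        rw [if_neg h0]
        by_cases h1 : Finsupp.single (1 : Fin 2) 1 ≤ s
        · rw [if_pos h1, hBt, if_pos (by rw [hsub0]; exact h0'),
            tsub_add_cancel_of_le h1, coeff_apply]
          ring
        · have h1' : s 1 = 0 := by
            by_contra hc
            exact h1 (by simpa [Finsupp.single_le_iff] using Nat.one_le_iff_ne_zero.2 hc)
          rw [if_neg h1, coeff_apply]
          have hz : coeff s f = 0 := h s (by omega)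
          rw [coeff_apply] at hz
          simp [hz]
    rw [hfeq, pow_succ']
    refine Ideal.add_mem _ ?_ ?_
    · exact Ideal.mul_mem_mul (Ideal.subset_span (by simp)) (ih A (fun s hs => by
        rw [hAt]; exact h _ (by simp [Finsupp.single_apply]; omega)))
    · exact Ideal.mul_mem_mul (Ideal.subset_span (by simp)) (ih B (fun s hs => by
        rw [hBt]
        split
        · exact h _ (by simp [Finsupp.single_apply]; omega)
        · rfl))

lemma prod_expand (a b : Fin 3 → ℂ) :
    linForm (a 0) (b 0) * linForm (a 1) (b 1) * linForm (a 2) (b 2)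
      = monomial (ee 3 0) (a 0 * a 1 * a 2)
      + monomial (ee 2 1) (a 0 * a 1 * b 2 + a 0 * b 1 * a 2 + b 0 * a 1 * a 2)
      + monomial (ee 1 2) (a 0 * b 1 * b 2 + b 0 * a 1 * b 2 + b 0 * b 1 * a 2)
      + monomial (ee 0 3) (b 0 * b 1 * b 2) := by
  rw [← CXX, ← CXX, ← CXX, ← CXX]
  simp only [linForm, smul_eq_C_mul, map_add, _root_.map_mul]
  ring

lemma solve_cubic (γ20 γ11 γ02 δ20 δ11 δ02 : ℂ)
    (h : (Matrix.det !![γ20, γ11, γ02, 0; 0, γ20, γ11, γ02;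
        δ20, δ11, δ02, 0; 0, δ20, δ11, δ02]) ≠ 0)
    (t0 t1 t2 t3 : ℂ) :
    ∃ x : Fin 4 → ℂ,
      x 0 * γ20 + x 2 * δ20 = t0 ∧
      x 0 * γ11 + x 1 * γ20 + x 2 * δ11 + x 3 * δ20 = t1 ∧
      x 0 * γ02 + x 1 * γ11 + x 2 * δ02 + x 3 * δ11 = t2 ∧
      x 1 * γ02 + x 3 * δ02 = t3 := by
  set M : Matrix (Fin 4) (Fin 4) ℂ :=
    !![γ20, γ11, γ02, 0; 0, γ20, γ11, γ02; δ20, δ11, δ02, 0; 0, δ20, δ11, δ02] with hM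
  set t : Fin 4 → ℂ := ![t0, t1, t2, t3] with ht
  set x : Fin 4 → ℂ := t ᵥ* M⁻¹ with hx
  have hident : x ᵥ* M = t := by
    rw [hx, Matrix.vecMul_vecMul, Matrix.nonsing_inv_mul M (isUnit_iff_ne_zero.2 h),
      Matrix.vecMul_one]
  refine ⟨x, ?_, ?_, ?_, ?_⟩
  · have h0 := congrFun hident 0
    simp [Matrix.vecMul, dotProduct, Fin.sum_univ_four, hM, ht] at h0
    linear_combination h0
  · have h1 := congrFun hident 1
    simp [Matrix.vecMul, dotProduct, Fin.sum_univ_four, hM, ht] at h1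
    linear_combination h1
  · have h2 := congrFun hident 2
    simp [Matrix.vecMul, dotProduct, Fin.sum_univ_four, hM, ht] at h2
    linear_combination h2
  · have h3 := congrFun hident 3
    simp [Matrix.vecMul, dotProduct, Fin.sum_univ_four, hM, ht] at h3
    linear_combination h3

lemma det_formula (a b : Fin 3 → ℂ) :
    (Matrix.det !![3*(a 0*a 1*a 2), 2*(a 0*a 1*b 2 + a 0*b 1*a 2 + b 0*a 1*a 2),
        (a 0*b 1*b 2 + b 0*a 1*b 2 + b 0*b 1*a 2), 0;
        0, 3*(a 0*a 1*a 2), 2*(a 0*a 1*b 2 + a 0*b 1*a 2 + b 0*a 1*a 2),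
        (a 0*b 1*b 2 + b 0*a 1*b 2 + b 0*b 1*a 2);
        (a 0*a 1*b 2 + a 0*b 1*a 2 + b 0*a 1*a 2), 2*(a 0*b 1*b 2 + b 0*a 1*b 2 + b 0*b 1*a 2),
        3*(b 0*b 1*b 2), 0;
        0, (a 0*a 1*b 2 + a 0*b 1*a 2 + b 0*a 1*a 2), 2*(a 0*b 1*b 2 + b 0*a 1*b 2 + b 0*b 1*a 2),
        3*(b 0*b 1*b 2)])
      = -3 * ((a 0*b 1 - a 1*b 0) * (a 0*b 2 - a 2*b 0) * (a 1*b 2 - a 2*b 1))^2 := by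
  simp only [Matrix.det_succ_row_zero, Fin.sum_univ_succ, Matrix.submatrix_apply,
    Matrix.det_fin_zero, Fin.succAbove, Fin.lt_def, Matrix.cons_val', Matrix.cons_val_zero,
    Matrix.cons_val_one, Matrix.head_cons, Matrix.head_fin_const, Matrix.cons_val_fin_one,
    Fin.val_zero, Fin.val_succ, Matrix.cons_val_succ, Finset.univ_unique, Finset.sum_singleton,
    Fin.default_eq_zero, Fin.castSucc, Fin.castAdd, Fin.castLE, Nat.reduceAdd, Nat.reduceLT,
    decide_true, decide_false, if_true, if_false, Fin.isValue, Fin.mk_one, Fin.mk_zero,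
    Fin.val_eq_zero, pow_zero, pow_succ, Fin.coe_castSucc, Fin.val_one]
  simp [Matrix.vecHead, Matrix.vecTail]
  norm_num
  ring

lemma comb_identity (γ20 γ11 γ02 δ20 δ11 δ02 x0 x1 x2 x3 t0 t1 t2 t3 : ℂ)
    (E0 : x0 * γ20 + x2 * δ20 = t0)
    (E1 : x0 * γ11 + x1 * γ20 + x2 * δ11 + x3 * δ20 = t1)
    (E2 : x0 * γ02 + x1 * γ11 + x2 * δ02 + x3 * δ11 = t2)
    (E3 : x1 * γ02 + x3 * δ02 = t3) :
    monomial (ee 3 0) t0 + monomial (ee 2 1) t1 + monomial (ee 1 2) t2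
      + monomial (ee 0 3) t3
    = ((C : ℂ →+* R2) x0 * X 0 + (C : ℂ →+* R2) x1 * X 1) *
        (monomial (ee 2 0) γ20 + monomial (ee 1 1) γ11 + monomial (ee 0 2) γ02)
      + ((C : ℂ →+* R2) x2 * X 0 + (C : ℂ →+* R2) x3 * X 1) *
        (monomial (ee 2 0) δ20 + monomial (ee 1 1) δ11 + monomial (ee 0 2) δ02) := by
  have F0 := congrArg ((C : ℂ →+* R2)) E0
  have F1 := congrArg ((C : ℂ →+* R2)) E1
  have F2 := congrArg ((C : ℂ →+* R2)) E2
  have F3 := congrArg ((C : ℂ →+* R2)) E3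
  simp only [map_add, _root_.map_mul] at F0 F1 F2 F3
  rw [← CXX, ← CXX, ← CXX, ← CXX, ← CXX, ← CXX, ← CXX, ← CXX, ← CXX, ← CXX]
  linear_combination (-((X 0 : R2)^3 * (X 1 : R2)^0)) * F0 - ((X 0 : R2)^2 * (X 1 : R2)^1) * F1
    - ((X 0 : R2)^1 * (X 1 : R2)^2) * F2 - ((X 0 : R2)^0 * (X 1 : R2)^3) * F3

end D4Aux

open D4Aux Pointwise

/-- If g has vanishing 2-jet and its 3-jet is a product of three pairwise non-proportional
nonzero linear forms (a D₄ singularity), then m³ ⊆ J_g = (g_u, g_v). -/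
theorem cube_of_maximal_ideal_in_jacobian_of_D4
    (g : MvPowerSeries (Fin 2) ℂ) (a b : Fin 3 → ℂ)
    (hne : ∀ i, (a i, b i) ≠ (0, 0))
    (hprop : ∀ i j : Fin 3, i ≠ j → a i * b j - a j * b i ≠ 0)
    (hlow : ∀ s : Fin 2 →₀ ℕ, s.sum (fun _ n => n) < 3 → MvPowerSeries.coeff s g = 0)
    (hjet : ∀ s : Fin 2 →₀ ℕ, s.sum (fun _ n => n) = 3 →
      MvPowerSeries.coeff s g =
      MvPowerSeries.coeff s (linForm (a 0) (b 0) * linForm (a 1) (b 1) * linForm (a 2) (b 2))) :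
    (Ideal.span {(MvPowerSeries.X 0 : MvPowerSeries (Fin 2) ℂ), MvPowerSeries.X 1}) ^ 3 ≤
      Ideal.span {psDeriv 0 g, psDeriv 1 g} := by
  classical
  set mI : Ideal R2 := Ideal.span {(X 0 : R2), X 1} with hmI
  set J : Ideal R2 := Ideal.span {psDeriv 0 g, psDeriv 1 g} with hJ
  set c3 : ℂ := a 0 * a 1 * a 2 with hc3
  set c2 : ℂ := a 0 * a 1 * b 2 + a 0 * b 1 * a 2 + b 0 * a 1 * a 2 with hc2
  set c1 : ℂ := a 0 * b 1 * b 2 + b 0 * a 1 * b 2 + b 0 * b 1 * a 2 with hc1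
  set c0 : ℂ := b 0 * b 1 * b 2 with hc0
  -- low-degree coefficients of g
  have hglow : ∀ i j : ℕ, i + j < 3 → MvPowerSeries.coeff (ee i j) g = 0 := by
    intro i j h
    apply hlow
    rw [sum_eq, ee_apply0, ee_apply1]
    omega
  have hjet' : ∀ i j : ℕ, i + j = 3 → MvPowerSeries.coeff (ee i j) g =
      MvPowerSeries.coeff (ee i j)
        (linForm (a 0) (b 0) * linForm (a 1) (b 1) * linForm (a 2) (b 2)) := by
    intro i j h
    apply hjet
    rw [sum_eq, ee_apply0, ee_apply1]
    omega
  have hg30 : MvPowerSeries.coeff (ee 3 0) g = c3 := by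
    rw [hjet' 3 0 rfl, prod_expand, hc3]
    simp [coeff_monomial, ee_eq_ee_iff]
  have hg21 : MvPowerSeries.coeff (ee 2 1) g = c2 := by
    rw [hjet' 2 1 rfl, prod_expand, hc2]
    simp [coeff_monomial, ee_eq_ee_iff]
  have hg12 : MvPowerSeries.coeff (ee 1 2) g = c1 := by
    rw [hjet' 1 2 rfl, prod_expand, hc1]
    simp [coeff_monomial, ee_eq_ee_iff]
  have hg03 : MvPowerSeries.coeff (ee 0 3) g = c0 := by
    rw [hjet' 0 3 rfl, prod_expand, hc0]
    simp [coeff_monomial, ee_eq_ee_iff]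
  have hg10 : MvPowerSeries.coeff (ee 1 0) g = 0 := hglow 1 0 (by omega)
  have hg01 : MvPowerSeries.coeff (ee 0 1) g = 0 := hglow 0 1 (by omega)
  have hg20 : MvPowerSeries.coeff (ee 2 0) g = 0 := hglow 2 0 (by omega)
  have hg11 : MvPowerSeries.coeff (ee 1 1) g = 0 := hglow 1 1 (by omega)
  have hg02 : MvPowerSeries.coeff (ee 0 2) g = 0 := hglow 0 2 (by omega)
  -- the quadratic approximations of the partial derivatives
  have hpd0 : ∀ s : Fin 2 →₀ ℕ, MvPowerSeries.coeff s (psDeriv 0 g)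
      = ((s 0 : ℂ) + 1) * MvPowerSeries.coeff (s + Finsupp.single 0 1) g := fun s => rfl
  have hpd1 : ∀ s : Fin 2 →₀ ℕ, MvPowerSeries.coeff s (psDeriv 1 g)
      = ((s 1 : ℂ) + 1) * MvPowerSeries.coeff (s + Finsupp.single 1 1) g := fun s => rfl
  have hr1 : psDeriv 0 g - (monomial (ee 2 0) (3*c3) + monomial (ee 1 1) (2*c2)
      + monomial (ee 0 2) c1) ∈ mI ^ 3 := by
    rw [hmI]
    apply mem_pow_of_vanish
    intro s hs
    obtain ⟨i, j, rfl⟩ : ∃ i j, s = ee i j := ⟨_, _, eq_ee s⟩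
    rw [ee_apply0, ee_apply1] at hs
    rw [map_sub, hpd0, ee_add_single0, ee_apply0]
    have hi : i ≤ 2 := by omega
    have hj : j ≤ 2 := by omega
    interval_cases i <;> interval_cases j <;>
      first
        | exact absurd hs (by omega)
        | (norm_num [hg10, hg01, hg20, hg11, hg02, hg30, hg21, hg12, hg03,
            coeff_monomial, ee_eq_ee_iff]; try ring)
  have hr2 : psDeriv 1 g - (monomial (ee 2 0) c2 + monomial (ee 1 1) (2*c1)
      + monomial (ee 0 2) (3*c0)) ∈ mI ^ 3 := by
    rw [hmI]
    apply mem_pow_of_vanish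
    intro s hs
    obtain ⟨i, j, rfl⟩ : ∃ i j, s = ee i j := ⟨_, _, eq_ee s⟩
    rw [ee_apply0, ee_apply1] at hs
    rw [map_sub, hpd1, ee_add_single1, ee_apply1]
    have hi : i ≤ 2 := by omega
    have hj : j ≤ 2 := by omega
    interval_cases i <;> interval_cases j <;>
      first
        | exact absurd hs (by omega)
        | (norm_num [hg10, hg01, hg20, hg11, hg02, hg30, hg21, hg12, hg03,
            coeff_monomial, ee_eq_ee_iff]; try ring)
  -- the determinant is nonzero
  have hdet : (Matrix.det !![3*c3, 2*c2, c1, 0; 0, 3*c3, 2*c2, c1;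
      c2, 2*c1, 3*c0, 0; 0, c2, 2*c1, 3*c0]) ≠ 0 := by
    rw [hc3, hc2, hc1, hc0, det_formula a b]
    refine mul_ne_zero (by norm_num) (pow_ne_zero _ ?_)
    exact mul_ne_zero (mul_ne_zero (hprop 0 1 (by decide)) (hprop 0 2 (by decide)))
      (hprop 1 2 (by decide))
  -- every cubic form lies in J + mI^4
  have hcomb : ∀ t0 t1 t2 t3 : ℂ,
      monomial (ee 3 0) t0 + monomial (ee 2 1) t1 + monomial (ee 1 2) t2
        + monomial (ee 0 3) t3 ∈ J ⊔ mI ^ 4 := by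
    intro t0 t1 t2 t3
    obtain ⟨x, E0, E1, E2, E3⟩ := solve_cubic (3*c3) (2*c2) c1 c2 (2*c1) (3*c0) hdet t0 t1 t2 t3
    have hid := comb_identity (3*c3) (2*c2) c1 c2 (2*c1) (3*c0)
      (x 0) (x 1) (x 2) (x 3) t0 t1 t2 t3 E0 E1 E2 E3
    rw [hid]
    have hrw : ∀ LA LB P1 P2 Q1 Q2 : R2,
        LA * Q1 + LB * Q2 = (LA * P1 + LB * P2) - (LA * (P1 - Q1) + LB * (P2 - Q2)) := by
      intros; ring
    rw [hrw _ _ (psDeriv 0 g) (psDeriv 1 g)]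
    have hmemJ : psDeriv 0 g ∈ J := by rw [hJ]; exact Ideal.subset_span (by simp)
    have hmemJ' : psDeriv 1 g ∈ J := by rw [hJ]; exact Ideal.subset_span (by simp)
    have h4 : ∀ L r : R2, L ∈ mI → r ∈ mI ^ 3 → L * r ∈ mI ^ 4 := by
      intro L r hL hr
      have := Ideal.mul_mem_mul hL hr
      rwa [← pow_succ'] at this
    have hLmem : ∀ y0 y1 : ℂ, (C : ℂ →+* R2) y0 * X 0 + (C : ℂ →+* R2) y1 * X 1 ∈ mI := by
      intro y0 y1
      rw [hmI]
      exact add_mem (Ideal.mul_mem_left _ _ (Ideal.subset_span (by simp)))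
        (Ideal.mul_mem_left _ _ (Ideal.subset_span (by simp)))
    refine sub_mem (Submodule.mem_sup_left ?_) (Submodule.mem_sup_right ?_)
    · exact add_mem (Ideal.mul_mem_left _ _ hmemJ) (Ideal.mul_mem_left _ _ hmemJ')
    · exact add_mem (h4 _ _ (hLmem _ _) hr1) (h4 _ _ (hLmem _ _) hr2)
  have hmem30 : monomial (ee 3 0) (1:ℂ) ∈ J ⊔ mI ^ 4 := by
    have := hcomb 1 0 0 0; simpa using this
  have hmem21 : monomial (ee 2 1) (1:ℂ) ∈ J ⊔ mI ^ 4 := by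
    have := hcomb 0 1 0 0; simpa using this
  have hmem12 : monomial (ee 1 2) (1:ℂ) ∈ J ⊔ mI ^ 4 := by
    have := hcomb 0 0 1 0; simpa using this
  have hmem03 : monomial (ee 0 3) (1:ℂ) ∈ J ⊔ mI ^ 4 := by
    have := hcomb 0 0 0 1; simpa using this
  -- Nakayama
  have hfg : (mI ^ 3).FG := by
    rw [hmI]
    exact (Submodule.fg_span (Set.toFinite _)).pow 3
  have hjac : mI ≤ (⊥ : Ideal R2).jacobson := by
    rw [IsLocalRing.jacobson_eq_maximalIdeal (⊥ : Ideal R2) bot_ne_top, hmI, Ideal.span_le]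
    rintro z hz
    simp only [Set.mem_insert_iff, Set.mem_singleton_iff] at hz
    have hnu : ¬ IsUnit z := by
      rcases hz with rfl | rfl <;>
      · intro hu
        have := hu.map ((constantCoeff : R2 →+* ℂ))
        rw [constantCoeff_X] at this
        simpa using this
    exact (IsLocalRing.mem_maximalIdeal z).2 hnu
  have hpow3 : mI ^ 3 = Ideal.span ((({(X 0 : R2), X 1} : Set R2) * ({(X 0 : R2), X 1} : Set R2)) *
      ({(X 0 : R2), X 1} : Set R2)) := by
    rw [hmI, pow_succ, pow_succ, pow_one, Ideal.span_mul_span', Ideal.span_mul_span']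
  have hNN : mI ^ 3 ≤ J ⊔ mI • mI ^ 3 := by
    have hsm : mI • mI ^ 3 = mI ^ 4 := by
      rw [Ideal.smul_eq_mul, ← pow_succ']
    rw [hsm, hpow3, Ideal.span_le]
    rintro z ⟨u, hu, v, hv, rfl⟩
    obtain ⟨p, hp, q, hq, rfl⟩ := hu
    simp only [Set.mem_insert_iff, Set.mem_singleton_iff] at hp hq hv
    rcases hp with rfl | rfl <;> rcases hq with rfl | rfl <;> rcases hv with rfl | rfl <;> beta_reduce
    · rw [show (X 0 : R2) * X 0 * X 0 = monomial (ee 3 0) (1:ℂ) by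
        rw [← CXX 1 3 0, _root_.map_one]; ring]
      exact hmem30
    · rw [show (X 0 : R2) * X 0 * X 1 = monomial (ee 2 1) (1:ℂ) by
        rw [← CXX 1 2 1, _root_.map_one]; ring]
      exact hmem21
    · rw [show (X 0 : R2) * X 1 * X 0 = monomial (ee 2 1) (1:ℂ) by
        rw [← CXX 1 2 1, _root_.map_one]; ring]
      exact hmem21
    · rw [show (X 0 : R2) * X 1 * X 1 = monomial (ee 1 2) (1:ℂ) by
        rw [← CXX 1 1 2, _root_.map_one]; ring]
      exact hmem12
    · rw [show (X 1 : R2) * X 0 * X 0 = monomial (ee 2 1) (1:ℂ) by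
        rw [← CXX 1 2 1, _root_.map_one]; ring]
      exact hmem21
    · rw [show (X 1 : R2) * X 0 * X 1 = monomial (ee 1 2) (1:ℂ) by
        rw [← CXX 1 1 2, _root_.map_one]; ring]
      exact hmem12
    · rw [show (X 1 : R2) * X 1 * X 0 = monomial (ee 1 2) (1:ℂ) by
        rw [← CXX 1 1 2, _root_.map_one]; ring]
      exact hmem12
    · rw [show (X 1 : R2) * X 1 * X 1 = monomial (ee 0 3) (1:ℂ) by
        rw [← CXX 1 0 3, _root_.map_one]; ring]
      exact hmem03
  exact Submodule.le_of_le_smul_of_le_jacobson_bot hfg hjac hNN
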